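/- arXiv:1401.3160 — 2 statements merged into one kernel-verified Lean document; each statement's English description precedes it below -/
import Mathlib

section
/- Let g be the real symmetric bilinear form on ℝ⁴ defined on 2-by-2 Hermitian-matrix-valued linear forms by det(σ(p)) = −g(p,p), where σ(p) = Σ_j p_j σ^j for Hermitian matrices σ^1,...,σ^4 that are linearly independent over ℝ. Then g has Lorentzian signature: three positive eigenvalues and one negative eigenvalue. -/
open Matrix

private lemma sym_ext4 (A : Matrix (Fin 4) (Fin 4) ℝ) (hA : Aᵀ = A)
    (h : ∀ p : Fin 4 → ℝ, p ⬝ᵥ A.mulVec p = 0) : A = 0 := by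
  have hdiag : ∀ i, A i i = 0 := by
    intro i
    simpa [Matrix.mulVec_single, single_dotProduct] using h (Pi.single i 1)
  refine Matrix.ext fun i j => ?_
  by_cases hij : i = j
  · subst hij; simpa using hdiag i
  · have h2 := h (Pi.single i 1 + Pi.single j 1)
    have hsym : A j i = A i j := by
      have := congrFun (congrFun hA i) j; simpa using this
    simp [Matrix.mulVec_add, dotProduct_add, add_dotProduct,
      Matrix.mulVec_single, single_dotProduct, hdiag, hsym] at h2
    simpa using by linarith

private lemma aux_Ms : (!![0,0,0,-(1/2); 0,1,0,0; 0,0,1,0; -(1/2),0,0,0] :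
    Matrix (Fin 4) (Fin 4) ℝ)ᵀ = !![0,0,0,-(1/2); 0,1,0,0; 0,0,1,0; -(1/2),0,0,0] := by
  refine Matrix.ext fun i j => ?_
  fin_cases i <;> fin_cases j <;> simp [Matrix.transpose_apply, Matrix.vecHead, Matrix.vecTail]

private lemma aux_SM : (!![0,0,1,-1; 1,0,0,0; 0,1,0,0; 0,0,-1,-1] : Matrix (Fin 4) (Fin 4) ℝ)ᵀ *
    (!![0,0,0,-(1/2); 0,1,0,0; 0,0,1,0; -(1/2),0,0,0] * !![0,0,1,-1; 1,0,0,0; 0,1,0,0; 0,0,-1,-1])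
    = Matrix.diagonal ![1,1,1,-1] := by
  refine Matrix.ext fun i j => ?_
  fin_cases i <;> fin_cases j <;>
    simp [Matrix.mul_apply, Fin.sum_univ_four, Matrix.diagonal,
      Matrix.transpose_apply, Matrix.vecHead, Matrix.vecTail] <;> norm_num

private lemma aux_Sdet : (!![0,0,1,-1; 1,0,0,0; 0,1,0,0; 0,0,-1,-1] :
    Matrix (Fin 4) (Fin 4) ℝ).det ≠ 0 := by
  rw [Matrix.det_succ_row_zero]
  simp [Fin.sum_univ_succ, Matrix.det_fin_three, Fin.succAbove]
  norm_num

theorem stmt_6 (σ : Fin 4 → Matrix (Fin 2) (Fin 2) ℂ)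
    (hherm : ∀ j, (σ j).IsHermitian)
    (hli : LinearIndependent ℝ σ)
    (g : Matrix (Fin 4) (Fin 4) ℝ) (hsymm : gᵀ = g)
    (hg : ∀ p : Fin 4 → ℝ,
      ((∑ α, ∑ β, g α β * p α * p β : ℝ) : ℂ)
        = -Matrix.det (∑ α, p α • σ α)) :
    ∃ T : Matrix (Fin 4) (Fin 4) ℝ, IsUnit T.det ∧
      Tᵀ * g * T = Matrix.diagonal ![1, 1, 1, -1] := by
  classical
  -- coordinates of hermitian matrices
  set L : Matrix (Fin 4) (Fin 4) ℝ := Matrix.of fun i α =>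
    ![(σ α 0 0).re, (σ α 0 1).re, (σ α 0 1).im, (σ α 1 1).re] i with hL
  -- realness of diagonal entries
  have hre : ∀ (α : Fin 4) (i : Fin 2), σ α i i = ((σ α i i).re : ℂ) := by
    intro α i
    have h' : (starRingEnd ℂ) (σ α i i) = σ α i i := (hherm α).apply i i
    exact (Complex.conj_eq_iff_re.mp h').symm
  have h10 : ∀ α : Fin 4, σ α 1 0 = (starRingEnd ℂ) (σ α 0 1) := by
    intro α; exact ((hherm α).apply 1 0).symm
  -- entries of σ(p)
  have hx00 : ∀ p : Fin 4 → ℝ, (∑ α, p α • σ α) 0 0 = ((L.mulVec p 0 : ℝ) : ℂ) := by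
    intro p
    simp only [Matrix.sum_apply, Matrix.smul_apply, Matrix.mulVec, dotProduct]
    push_cast
    refine Finset.sum_congr rfl fun α _ => ?_
    rw [hre α 0]
    simp only [hL, Matrix.of_apply, Matrix.cons_val_zero, Complex.real_smul]
    ring
  have hx11 : ∀ p : Fin 4 → ℝ, (∑ α, p α • σ α) 1 1 = ((L.mulVec p 3 : ℝ) : ℂ) := by
    intro p
    simp only [Matrix.sum_apply, Matrix.smul_apply, Matrix.mulVec, dotProduct]
    push_cast
    refine Finset.sum_congr rfl fun α _ => ?_
    rw [hre α 1]
    simp only [hL, Matrix.of_apply, Matrix.cons_val_three, Matrix.tail_cons,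
      Matrix.head_cons, Complex.real_smul]
    ring
  have hx01 : ∀ p : Fin 4 → ℝ, (∑ α, p α • σ α) 0 1
      = ((L.mulVec p 1 : ℝ) : ℂ) + ((L.mulVec p 2 : ℝ) : ℂ) * Complex.I := by
    intro p
    simp only [Matrix.sum_apply, Matrix.smul_apply, Matrix.mulVec, dotProduct]
    push_cast
    rw [Finset.sum_mul, ← Finset.sum_add_distrib]
    refine Finset.sum_congr rfl fun α _ => ?_
    rw [show (σ α 0 1) = ((σ α 0 1).re : ℂ) + (σ α 0 1).im * Complex.I from
      (Complex.re_add_im _).symm]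
    simp only [hL, Matrix.of_apply, Matrix.cons_val_one, Matrix.head_cons,
      Matrix.cons_val_two, Matrix.tail_cons, Matrix.cons_val_zero, Complex.real_smul]
    ring
  have hx10 : ∀ p : Fin 4 → ℝ, (∑ α, p α • σ α) 1 0
      = ((L.mulVec p 1 : ℝ) : ℂ) - ((L.mulVec p 2 : ℝ) : ℂ) * Complex.I := by
    intro p
    simp only [Matrix.sum_apply, Matrix.smul_apply, Matrix.mulVec, dotProduct]
    push_cast
    rw [sub_eq_add_neg, ← neg_mul, ← Finset.sum_neg_distrib, Finset.sum_mul,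
      ← Finset.sum_add_distrib]
    refine Finset.sum_congr rfl fun α _ => ?_
    rw [h10 α, show (σ α 0 1) = ((σ α 0 1).re : ℂ) + (σ α 0 1).im * Complex.I from
      (Complex.re_add_im _).symm]
    simp only [hL, Matrix.of_apply, Matrix.cons_val_one, Matrix.head_cons,
      Matrix.cons_val_two, Matrix.tail_cons, Matrix.cons_val_zero, Complex.real_smul, map_add, _root_.map_mul,
      Complex.conj_ofReal, Complex.conj_I]
    ring
  -- determinant formula
  have hdet : ∀ p : Fin 4 → ℝ, Matrix.det (∑ α, p α • σ α)
      = (((L.mulVec p 0) * (L.mulVec p 3) - (L.mulVec p 1)^2 - (L.mulVec p 2)^2 : ℝ) : ℂ) := by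
    intro p
    rw [Matrix.det_fin_two, hx00 p, hx11 p, hx01 p, hx10 p]
    push_cast
    ring_nf
    rw [Complex.I_sq]
    ring
  -- quadratic form matrix M
  set M : Matrix (Fin 4) (Fin 4) ℝ :=
    !![0,0,0,-(1/2); 0,1,0,0; 0,0,1,0; -(1/2),0,0,0] with hM
  -- g = Lᵀ M L
  have hquad : ∀ p : Fin 4 → ℝ, p ⬝ᵥ g.mulVec p = p ⬝ᵥ (Lᵀ * M * L).mulVec p := by
    intro p
    have h1 : (∑ α, ∑ β, g α β * p α * p β : ℝ)
        = (L.mulVec p 1)^2 + (L.mulVec p 2)^2 - (L.mulVec p 0) * (L.mulVec p 3) := by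
      have h0 := hg p
      rw [hdet p] at h0
      have h1' : (∑ α, ∑ β, g α β * p α * p β : ℝ)
          = -((L.mulVec p 0) * (L.mulVec p 3) - (L.mulVec p 1)^2 - (L.mulVec p 2)^2) := by
        exact_mod_cast h0
      linarith
    have h2 : p ⬝ᵥ g.mulVec p = ∑ α, ∑ β, g α β * p α * p β := by
      simp only [dotProduct, Matrix.mulVec, Finset.mul_sum]
      exact Finset.sum_congr rfl fun α _ => Finset.sum_congr rfl fun β _ => by ring
    have h3 : p ⬝ᵥ (Lᵀ * M * L).mulVec p
        = (L.mulVec p) ⬝ᵥ M.mulVec (L.mulVec p) := by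
      rw [← Matrix.mulVec_mulVec, ← Matrix.mulVec_mulVec, Matrix.dotProduct_mulVec,
        Matrix.vecMul_transpose]
    rw [h2, h1, h3]
    generalize L.mulVec p = y
    rw [hM]
    simp [Matrix.mulVec, dotProduct, Fin.sum_univ_four, Matrix.vecHead, Matrix.vecTail]
    ring
  have hMs : Mᵀ = M := by rw [hM]; exact aux_Ms
  have hgM : g = Lᵀ * M * L := by
    have hsym2 : (Lᵀ * M * L)ᵀ = Lᵀ * M * L := by
      rw [Matrix.transpose_mul, Matrix.transpose_mul, Matrix.transpose_transpose, hMs,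
        Matrix.mul_assoc]
    have h0 := sym_ext4 (g - Lᵀ * M * L)
      (by rw [Matrix.transpose_sub, hsymm, hsym2])
      (fun p => by rw [Matrix.sub_mulVec, dotProduct_sub, hquad p, sub_self])
    exact sub_eq_zero.mp h0
  -- L is invertible
  have hker : ∀ p : Fin 4 → ℝ, L.mulVec p = 0 → p = 0 := by
    intro p hp
    have hσ0 : ∑ α, p α • σ α = 0 := by
      refine Matrix.ext fun i j => ?_
      fin_cases i <;> fin_cases j <;>
        simp [hx00 p, hx01 p, hx10 p, hx11 p, hp]
    have hz := Fintype.linearIndependent_iff.mp hli p hσ0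
    funext i; exact hz i
  have hLinj : Function.Injective L.mulVec := by
    intro a b hab
    have h0 : L.mulVec (a - b) = 0 := by
      rw [Matrix.mulVec_sub, hab, sub_self]
    have := hker _ h0
    exact sub_eq_zero.mp this
  have hLu : IsUnit L.det := by
    rw [← Matrix.isUnit_iff_isUnit_det]
    exact Matrix.mulVec_injective_iff_isUnit.mp hLinj
  -- change of basis for M
  set S : Matrix (Fin 4) (Fin 4) ℝ :=
    !![0,0,1,-1; 1,0,0,0; 0,1,0,0; 0,0,-1,-1] with hS
  have hSM : Sᵀ * (M * S) = Matrix.diagonal ![1, 1, 1, -1] := by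
    rw [hS, hM]; exact aux_SM
  have hSdet : S.det ≠ 0 := by rw [hS]; exact aux_Sdet
  refine ⟨L⁻¹ * S, ?_, ?_⟩
  · rw [Matrix.det_mul, Matrix.det_nonsing_inv, Ring.inverse_eq_inv']
    exact isUnit_iff_ne_zero.mpr (mul_ne_zero (inv_ne_zero hLu.ne_zero) hSdet)
  · have h1 : L * L⁻¹ = 1 := Matrix.mul_nonsing_inv L hLu
    have h2 : Lᵀ⁻¹ * Lᵀ = 1 := Matrix.nonsing_inv_mul Lᵀ (by rwa [Matrix.det_transpose])
    have e1 : ∀ X : Matrix (Fin 4) (Fin 4) ℝ, Lᵀ⁻¹ * (Lᵀ * X) = X := fun X => by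
      rw [← Matrix.mul_assoc, h2, Matrix.one_mul]
    have e2 : ∀ X : Matrix (Fin 4) (Fin 4) ℝ, L * (L⁻¹ * X) = X := fun X => by
      rw [← Matrix.mul_assoc, h1, Matrix.one_mul]
    rw [hgM, Matrix.transpose_mul, Matrix.transpose_nonsing_inv]
    simp only [Matrix.mul_assoc]
    rw [e1, e2]
    exact hSM
end

section
/- For R ∈ SL(2,ℂ) and the standard Pauli matrices with identity s¹,...,s⁴, the map on coefficient vectors induced by σ ↦ R* σ R is a Lorentz transformation: the real 4×4 matrix Λ defined by R* s^k R = Σ_j Λ^j{}_k s^j (expansion in the Hermitian basis) preserves the quadratic form c₄² − c₁² − c₂² − c₃². -/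
open Matrix

theorem stmt_17 (R : Matrix.SpecialLinearGroup (Fin 2) ℂ)
    (s : Fin 4 → Matrix (Fin 2) (Fin 2) ℂ)
    (hs : s = ![!![(0 : ℂ), 1; 1, 0], !![(0 : ℂ), -Complex.I; Complex.I, 0],
      !![(1 : ℂ), 0; 0, -1], !![(1 : ℂ), 0; 0, 1]])
    (Λ : Matrix (Fin 4) (Fin 4) ℝ)
    (hΛ : ∀ k, (R : Matrix (Fin 2) (Fin 2) ℂ)ᴴ * s k * R = ∑ j, Λ j k • s j) :
    ∀ c : Fin 4 → ℝ,
      (∑ k, Λ 3 k * c k) ^ 2 - (∑ k, Λ 0 k * c k) ^ 2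
        - (∑ k, Λ 1 k * c k) ^ 2 - (∑ k, Λ 2 k * c k) ^ 2
      = c 3 ^ 2 - c 0 ^ 2 - c 1 ^ 2 - c 2 ^ 2 := by
  intro c
  have hdet : ∀ d : Fin 4 → ℝ, (∑ j, (d j : ℂ) • s j).det
      = ((d 3 ^ 2 - d 0 ^ 2 - d 1 ^ 2 - d 2 ^ 2 : ℝ) : ℂ) := by
    intro d
    have hmat : (∑ j, (d j : ℂ) • s j)
        = !![(d 3 : ℂ) + d 2, d 0 - Complex.I * d 1;
             (d 0 : ℂ) + Complex.I * d 1, (d 3 : ℂ) - d 2] := by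
      subst hs
      ext i j
      fin_cases i <;> fin_cases j <;>
        simp [Fin.sum_univ_four] <;> ring
    rw [hmat, Matrix.det_fin_two_of]
    have : Complex.I * Complex.I = -1 := Complex.I_mul_I
    push_cast
    ring_nf
    rw [Complex.I_sq]
    ring
  set Rm := (R : Matrix (Fin 2) (Fin 2) ℂ)
  have h1 : Rmᴴ * (∑ k, (c k : ℂ) • s k) * Rm
      = ∑ j, ((∑ k, Λ j k * c k : ℝ) : ℂ) • s j := by
    rw [Finset.mul_sum, Finset.sum_mul]
    have : ∀ k, Rmᴴ * ((c k : ℂ) • s k) * Rm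
        = ∑ j, ((Λ j k * c k : ℝ) : ℂ) • s j := by
      intro k
      rw [mul_smul_comm, smul_mul_assoc, hΛ k, Finset.smul_sum]
      refine Finset.sum_congr rfl fun j _ => ?_
      ext a b
      simp [Matrix.smul_apply, Complex.real_smul]
      ring
    simp_rw [this]
    rw [Finset.sum_comm]
    refine Finset.sum_congr rfl fun j _ => ?_
    rw [← Finset.sum_smul]
    push_cast
    rfl
  have hdetR : Rm.det = 1 := R.2
  have key : (∑ j, ((∑ k, Λ j k * c k : ℝ) : ℂ) • s j).det
      = (∑ k, (c k : ℂ) • s k).det := by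
    rw [← h1, Matrix.det_mul, Matrix.det_mul, Matrix.det_conjTranspose, hdetR]
    simp
  rw [hdet, hdet] at key
  exact_mod_cast key
end
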